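/- Let 1 < p < ∞ and 1/p + 1/q = 1. Let u = (u_k) and v = (v_k) be real sequences with all terms nonzero such that Σ_{k=0}^∞ |u_k| < ∞ and Σ_{i=0}^∞ |v_i|^q < ∞. Then every sequence (X_k) of fuzzy numbers with Σ_{k=0}^∞ d(ΔX_k, 0̄)^p < ∞ belongs to bv^F(u,v). -/

import Mathlib

open Finset Filter Topology

/-- A fuzzy number, represented (via the Representation Theorem) by the pair of
functions `α ↦ X̲^(α)` and `α ↦ X̄^(α)` giving the endpoints of its α-cuts. -/
structure FuzzyNumber where
  lower : ℝ → ℝ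
  upper : ℝ → ℝ
  lower_mono : MonotoneOn lower (Set.Icc 0 1)
  upper_anti : AntitoneOn upper (Set.Icc 0 1)
  lower_leftCont : ∀ a ∈ Set.Ioc (0:ℝ) 1, ContinuousWithinAt lower (Set.Iic a) a
  upper_leftCont : ∀ a ∈ Set.Ioc (0:ℝ) 1, ContinuousWithinAt upper (Set.Iic a) a
  lower_rightCont : ContinuousWithinAt lower (Set.Ici 0) 0
  upper_rightCont : ContinuousWithinAt upper (Set.Ici 0) 0
  le_at_one : lower 1 ≤ upper 1

namespace FuzzyNumber

/-- The metric `d(X,Y) = sup_{α∈[0,1]} max(|X̲^(α)−Y̲^(α)|, |X̄^(α)−Ȳ^(α)|)`. -/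
noncomputable def dist (X Y : FuzzyNumber) : ℝ :=
  ⨆ α : Set.Icc (0:ℝ) 1, max |X.lower α - Y.lower α| |X.upper α - Y.upper α|

/-- Levelwise addition. -/
def add (X Y : FuzzyNumber) : FuzzyNumber where
  lower := fun α => X.lower α + Y.lower α
  upper := fun α => X.upper α + Y.upper α
  lower_mono := X.lower_mono.add Y.lower_mono
  upper_anti := X.upper_anti.add Y.upper_anti
  lower_leftCont := fun a ha => (X.lower_leftCont a ha).add (Y.lower_leftCont a ha)
  upper_leftCont := fun a ha => (X.upper_leftCont a ha).add (Y.upper_leftCont a ha)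
  lower_rightCont := X.lower_rightCont.add Y.lower_rightCont
  upper_rightCont := X.upper_rightCont.add Y.upper_rightCont
  le_at_one := add_le_add X.le_at_one Y.le_at_one

/-- Levelwise negation: `(−Y)^(α) = [−Ȳ^(α), −Y̲^(α)]`. -/
def neg (X : FuzzyNumber) : FuzzyNumber where
  lower := fun α => -X.upper α
  upper := fun α => -X.lower α
  lower_mono := X.upper_anti.neg
  upper_anti := X.lower_mono.neg
  lower_leftCont := fun a ha => (X.upper_leftCont a ha).neg
  upper_leftCont := fun a ha => (X.lower_leftCont a ha).neg
  lower_rightCont := X.upper_rightCont.neg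
  upper_rightCont := X.lower_rightCont.neg
  le_at_one := neg_le_neg X.le_at_one

/-- `X − Y = X + (−Y)`. -/
def sub (X Y : FuzzyNumber) : FuzzyNumber := X.add Y.neg

/-- The crisp fuzzy number `r̄`. -/
def const (r : ℝ) : FuzzyNumber where
  lower := fun _ => r
  upper := fun _ => r
  lower_mono := monotoneOn_const
  upper_anti := antitoneOn_const
  lower_leftCont := fun _ _ => continuousWithinAt_const
  upper_leftCont := fun _ _ => continuousWithinAt_const
  lower_rightCont := continuousWithinAt_const
  upper_rightCont := continuousWithinAt_const
  le_at_one := le_refl r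

/-- The membership function `X(t) = sup{α ∈ [0,1] : X̲^(α) ≤ t ≤ X̄^(α)}`. -/
noncomputable def memFun (X : FuzzyNumber) (t : ℝ) : ℝ :=
  sSup {a : ℝ | a ∈ Set.Icc (0:ℝ) 1 ∧ X.lower a ≤ t ∧ t ≤ X.upper a}

/-- A fuzzy number `S` is symmetric if `S(t) = S(−t)` for all `t`. -/
def IsSymmetric (S : FuzzyNumber) : Prop := ∀ t : ℝ, S.memFun t = S.memFun (-t)

/-- The difference sequence `ΔX_k = X_k − X_{k+1}`. -/
def delta (X : ℕ → FuzzyNumber) (k : ℕ) : FuzzyNumber := (X k).sub (X (k+1))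

/-- Membership in `bv^F(u,v)`:
`Σ_{k=0}^∞ |Σ_{i=0}^k u_k v_i d(ΔX_i, 0̄)| < ∞`. -/
def MemBvF (u v : ℕ → ℝ) (X : ℕ → FuzzyNumber) : Prop :=
  Summable fun k => |∑ i ∈ Finset.range (k+1), u k * v i * dist (delta X i) (const 0)|

end FuzzyNumber

open FuzzyNumber in
/-- if `1 < p`, `1/p + 1/q = 1`, `(u_k) ∈ ℓ¹`, `(|v_i|^q)` summable,
then every `(X_k)` with `Σ d(ΔX_k,0̄)^p < ∞` belongs to `bv^F(u,v)`. -/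
theorem lp_delta_subset_bvF (p q : ℝ) (hp : 1 < p) (hpq : 1 / p + 1 / q = 1)
    (u v : ℕ → ℝ) (hu : ∀ k, u k ≠ 0) (hv : ∀ k, v k ≠ 0)
    (hu1 : Summable fun k => |u k|) (hvq : Summable fun i => |v i| ^ q)
    (X : ℕ → FuzzyNumber)
    (hX : Summable fun k => dist (delta X k) (const 0) ^ p) :
    MemBvF u v X := by
  have hpq' : p.HolderConjugate q := Real.holderConjugate_iff.2 ⟨hp, by simpa [one_div] using hpq⟩
  set d : ℕ → ℝ := fun k => dist (delta X k) (const 0) with hd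
  have hd0 : ∀ k, 0 ≤ d k := fun k => Real.iSup_nonneg fun α => le_max_iff.2 (Or.inl (abs_nonneg _))
  have hS : Summable fun i => |v i| * d i := by
    apply Summable.of_nonneg_of_le (fun i => mul_nonneg (abs_nonneg _) (hd0 i))
      (fun i => ?_) ((hvq.div_const q).add (hX.div_const p))
    calc |v i| * d i ≤ |v i| ^ q / q + d i ^ p / p :=
          Real.young_inequality_of_nonneg (abs_nonneg _) (hd0 i) hpq'.symm
      _ = |v i| ^ q / q + d i ^ p / p := rfl
  set C : ℝ := ∑' i, |v i| * d i with hC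
  apply Summable.of_nonneg_of_le (fun k => abs_nonneg _) (fun k => ?_) (hu1.mul_right C)
  calc |∑ i ∈ Finset.range (k+1), u k * v i * d i|
      ≤ ∑ i ∈ Finset.range (k+1), |u k * v i * d i| := Finset.abs_sum_le_sum_abs _ _
    _ = ∑ i ∈ Finset.range (k+1), |u k| * (|v i| * d i) := by
        refine Finset.sum_congr rfl fun i _ => ?_
        rw [abs_mul, abs_mul, abs_of_nonneg (hd0 i), mul_assoc]
    _ = |u k| * ∑ i ∈ Finset.range (k+1), |v i| * d i := by rw [Finset.mul_sum]
    _ ≤ |u k| * C := by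
        apply mul_le_mul_of_nonneg_left _ (abs_nonneg _)
        exact hS.sum_le_tsum _ (fun i _ => mul_nonneg (abs_nonneg _) (hd0 i))
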